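/- Let P be a monic complex polynomial of degree n and let K = P⁻¹(R) for a compact set R ⊆ ℂ. For any polynomial Q, define Q_P(z) = (1/n)·∑ Q(y), the sum taken over the n roots y (with multiplicity) of P(y) = P(z). Then the sup of |φ(P(z)) − Q_P(z)| over K is at most the sup of |φ(P(z)) − Q(z)| over K, for any function φ continuous on R. -/

import Mathlib

open Polynomial

theorem stmt_5 (P : Polynomial ℂ) (hP : P.Monic) (n : ℕ) (hn : P.natDegree = n)
    (hn1 : 1 ≤ n) (R : Set ℂ) (hR : IsCompact R) (hRne : R.Nonempty)
    (K : Set ℂ) (hK : K = P.eval ⁻¹' R)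
    (φ : ℂ → ℂ) (hφ : ContinuousOn φ R) (Q : Polynomial ℂ) :
    (⨆ z : K, ‖φ (P.eval (z : ℂ)) -
        (1 / (n : ℂ)) * (((P - C (P.eval (z : ℂ))).roots).map Q.eval).sum‖) ≤
      ⨆ z : K, ‖φ (P.eval (z : ℂ)) - Q.eval (z : ℂ)‖ := by
  subst hK
  have hdeg : 0 < P.degree := natDegree_pos_iff_degree_pos.mp (by omega)
  have hn0 : (n : ℂ) ≠ 0 := by
    exact_mod_cast Nat.cast_ne_zero.mpr (by omega)
  -- For any c, P - C c is monic of natDegree n with n roots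
  have hmonic : ∀ c : ℂ, (P - C c).Monic := fun c =>
    hP.sub_of_left (lt_of_le_of_lt degree_C_le hdeg)
  have hnd : ∀ c : ℂ, (P - C c).natDegree = n := fun c => by
    rw [natDegree_sub_C, hn]
  have hcard : ∀ c : ℂ, (P - C c).roots.card = n := fun c => by
    rw [← hnd c]
    exact (splits_iff_card_roots.mp (IsAlgClosed.splits _))
  -- K is nonempty
  obtain ⟨r, hr⟩ := hRne
  obtain ⟨z0, hz0⟩ := Complex.exists_root (f := P - C r)
    (by rw [degree_sub_C hdeg]; exact hdeg)
  have hz0' : P.eval z0 = r := by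
    have := hz0
    simp only [IsRoot, eval_sub, eval_C, sub_eq_zero] at this
    exact this
  have hKne : (P.eval ⁻¹' R).Nonempty := ⟨z0, by simp [Set.mem_preimage, hz0', hr]⟩
  haveI : Nonempty (P.eval ⁻¹' R : Set ℂ) := hKne.to_subtype
  -- K is compact
  have hKclosed : IsClosed (P.eval ⁻¹' R) := hR.isClosed.preimage P.continuous_aeval
  have hKbdd : Bornology.IsBounded (P.eval ⁻¹' R) := by
    obtain ⟨C, hC⟩ := hR.isBounded.exists_norm_le
    have ht : Filter.Tendsto (fun z : ℂ => ‖P.eval z‖) (Bornology.cobounded ℂ) Filter.atTop :=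
      P.tendsto_norm_atTop hdeg tendsto_norm_cobounded_atTop
    rw [Bornology.isBounded_def]
    exact Filter.mem_of_superset (ht.eventually_ge_atTop (C + 1))
      (fun z hz hzK => absurd (hC _ hzK) (by simp at hz ⊢; linarith))
  have hKcomp : IsCompact (P.eval ⁻¹' R) := Metric.isCompact_of_isClosed_isBounded hKclosed hKbdd
  -- the RHS bound
  set S := ⨆ z : (P.eval ⁻¹' R : Set ℂ), ‖φ (P.eval (z : ℂ)) - Q.eval (z : ℂ)‖ with hS
  have hcont : ContinuousOn (fun z => ‖φ (P.eval z) - Q.eval z‖) (P.eval ⁻¹' R) := by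
    exact ((hφ.comp P.continuous_aeval.continuousOn (fun z hz => hz)).sub
      Q.continuous_aeval.continuousOn).norm
  have hbdd : BddAbove (Set.range fun z : (P.eval ⁻¹' R : Set ℂ) =>
      ‖φ (P.eval (z : ℂ)) - Q.eval (z : ℂ)‖) := by
    obtain ⟨M, hM⟩ := hKcomp.exists_bound_of_continuousOn hcont
    exact ⟨M, by rintro x ⟨z, rfl⟩; simpa using hM z z.2⟩
  have hle : ∀ y : ℂ, y ∈ P.eval ⁻¹' R → ‖φ (P.eval y) - Q.eval y‖ ≤ S :=
    fun y hy => le_ciSup hbdd (⟨y, hy⟩ : (P.eval ⁻¹' R : Set ℂ))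
  apply ciSup_le
  rintro ⟨z, hz⟩
  simp only
  set c := P.eval z with hc
  set M := (P - C c).roots with hM
  have hmemM : ∀ y ∈ M, P.eval y = c := by
    intro y hy
    have := (mem_roots ((hmonic c).ne_zero)).mp hy
    simpa [IsRoot, sub_eq_zero] using this
  -- rewrite difference as average
  have key : φ c - (1 / (n : ℂ)) * (M.map Q.eval).sum
      = (1 / (n : ℂ)) * (M.map (fun y => φ c - Q.eval y)).sum := by
    have : (M.map (fun y => φ c - Q.eval y)).sum
        = (M.map (fun _ => φ c)).sum - (M.map Q.eval).sum := by
      rw [← Multiset.sum_map_sub]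
    rw [this, Multiset.map_const', Multiset.sum_replicate, hcard c]
    field_simp
    ring
  rw [key]
  have h1 : ‖((1 / (n : ℂ)) * (M.map (fun y => φ c - Q.eval y)).sum)‖
      ≤ (1 / (n : ℝ)) * ((M.map (fun y => φ c - Q.eval y)).map (fun x => ‖x‖)).sum := by
    rw [norm_mul]
    gcongr
    · simp
    · exact norm_multiset_sum_le _
  have h2 : ((M.map (fun y => φ c - Q.eval y)).map (fun x => ‖x‖)).sum ≤ n * S := by
    have : ∀ x ∈ (M.map (fun y => φ c - Q.eval y)).map (fun x => ‖x‖), x ≤ S := by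
      intro x hx
      rw [Multiset.map_map] at hx
      obtain ⟨y, hyM, rfl⟩ := Multiset.mem_map.mp hx
      have hPy := hmemM y hyM
      have hyK : y ∈ P.eval ⁻¹' R := by
        simp only [Set.mem_preimage, hPy]; exact hz
      calc (fun x => ‖x‖) ((fun y => φ c - Q.eval y) y) = ‖φ (P.eval y) - Q.eval y‖ := by
              simp only [hPy]
        _ ≤ S := hle y hyK
    have := Multiset.sum_le_card_nsmul _ _ this
    simpa [Multiset.card_map, hM, hcard c, nsmul_eq_mul] using this
  have hS0 : 0 ≤ S := le_trans (norm_nonneg _) (hle z hz)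
  calc ‖((1 / (n : ℂ)) * (M.map (fun y => φ c - Q.eval y)).sum)‖
      ≤ (1 / (n : ℝ)) * ((M.map (fun y => φ c - Q.eval y)).map (fun x => ‖x‖)).sum := h1
    _ ≤ (1 / (n : ℝ)) * (n * S) := by gcongr
    _ = S := by
        have : (n : ℝ) ≠ 0 := by exact_mod_cast (by omega : n ≠ 0)
        field_simp
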